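/- Let μ ≠ 0 and α, β, ρ ∈ ℝ with ρ² = β² - 4α, ρ > 0. If y : ℝ → ℝ is twice differentiable, y > 0, and solves y'' + (y')²/y + (μ + β/y³) y' - μ² y + βμ/y² - α/y⁵ = 0, then I(z) = (2 e^{-μz} y (y' + μ y) - (β+ρ) e^{-μz}/y)^{ρ+β} · (2 e^{-μz} y (y' + μ y) - (β-ρ) e^{-μz}/y)^{ρ-β} is constant on any interval where both base expressions are positive. -/

import Mathlib

lemma aux_deriv (β ρ μ c α : ℝ) (hα : α = (β ^ 2 - ρ ^ 2) / 4) (y : ℝ → ℝ) (z : ℝ)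
    (hYz : HasDerivAt y (deriv y z) z)
    (hY'z : HasDerivAt (deriv y) (deriv (deriv y) z) z)
    (hyne : y z ≠ 0)
    (hdd : deriv (deriv y) z = -(deriv y z) ^ 2 / y z - (μ + β / y z ^ 3) * deriv y z
      + μ ^ 2 * y z - β * μ / y z ^ 2 + α / y z ^ 5)
    (hc : c = β + ρ ∨ c = β - ρ) :
    HasDerivAt
      (fun z => 2 * Real.exp (-(μ * z)) * y z * (deriv y z + μ * y z)
        - c * Real.exp (-(μ * z)) / y z)
      ((c - 2 * β) / (2 * y z ^ 3) *
        (2 * Real.exp (-(μ * z)) * y z * (deriv y z + μ * y z)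
          - c * Real.exp (-(μ * z)) / y z)) z := by
  have hEd : HasDerivAt (fun z : ℝ => Real.exp (-(μ * z))) (-μ * Real.exp (-(μ * z))) z := by
    have h : HasDerivAt (fun z : ℝ => -(μ * z)) (-μ) z := by
      exact (((hasDerivAt_id z).const_mul μ).neg).congr_deriv (by ring)
    simpa [mul_comm] using h.exp
  have h := (((hEd.const_mul 2).mul hYz).mul (hY'z.add (hYz.const_mul μ))).sub
    ((hEd.const_mul c).div hYz hyne)
  refine h.congr_deriv ?_
  simp only [Pi.add_apply, Pi.mul_apply]
  rw [hdd, hα]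
  rcases hc with rfl | rfl <;> field_simp <;> ring

theorem stmt_15 (α β ρ μ : ℝ) (hμ : μ ≠ 0) (hρ : ρ ^ 2 = β ^ 2 - 4 * α) (hρpos : 0 < ρ)
    (y : ℝ → ℝ) (hy : Differentiable ℝ y) (hy' : Differentiable ℝ (deriv y))
    (hypos : ∀ z : ℝ, 0 < y z)
    (heq : ∀ z : ℝ,
      deriv (deriv y) z + (deriv y z) ^ 2 / y z + (μ + β / y z ^ 3) * deriv y z
        - μ ^ 2 * y z + β * μ / y z ^ 2 - α / y z ^ 5 = 0)
    (a b : ℝ)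
    (hpos : ∀ z ∈ Set.Ioo a b,
      0 < 2 * Real.exp (-(μ * z)) * y z * (deriv y z + μ * y z)
            - (β + ρ) * Real.exp (-(μ * z)) / y z ∧
      0 < 2 * Real.exp (-(μ * z)) * y z * (deriv y z + μ * y z)
            - (β - ρ) * Real.exp (-(μ * z)) / y z) :
    ∀ x ∈ Set.Ioo a b, ∀ x' ∈ Set.Ioo a b,
      (2 * Real.exp (-(μ * x)) * y x * (deriv y x + μ * y x)
          - (β + ρ) * Real.exp (-(μ * x)) / y x) ^ (ρ + β) *
        (2 * Real.exp (-(μ * x)) * y x * (deriv y x + μ * y x)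
          - (β - ρ) * Real.exp (-(μ * x)) / y x) ^ (ρ - β)
      = (2 * Real.exp (-(μ * x')) * y x' * (deriv y x' + μ * y x')
          - (β + ρ) * Real.exp (-(μ * x')) / y x') ^ (ρ + β) *
        (2 * Real.exp (-(μ * x')) * y x' * (deriv y x' + μ * y x')
          - (β - ρ) * Real.exp (-(μ * x')) / y x') ^ (ρ - β) := by
  have hα : α = (β ^ 2 - ρ ^ 2) / 4 := by linarith
  have hYne : ∀ z : ℝ, y z ≠ 0 := fun z => (hypos z).ne'
  have hdd : ∀ z : ℝ, deriv (deriv y) z =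
      -(deriv y z) ^ 2 / y z - (μ + β / y z ^ 3) * deriv y z + μ ^ 2 * y z
        - β * μ / y z ^ 2 + α / y z ^ 5 := by
    intro z; linear_combination heq z
  have hu1 : ∀ z : ℝ, HasDerivAt
      (fun z => 2 * Real.exp (-(μ * z)) * y z * (deriv y z + μ * y z)
        - (β + ρ) * Real.exp (-(μ * z)) / y z)
      ((β + ρ - 2 * β) / (2 * y z ^ 3) *
        (2 * Real.exp (-(μ * z)) * y z * (deriv y z + μ * y z)
          - (β + ρ) * Real.exp (-(μ * z)) / y z)) z := fun z =>
    aux_deriv β ρ μ (β + ρ) α hα y z (hy z).hasDerivAt (hy' z).hasDerivAt (hYne z)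
      (hdd z) (Or.inl rfl)
  have hu2 : ∀ z : ℝ, HasDerivAt
      (fun z => 2 * Real.exp (-(μ * z)) * y z * (deriv y z + μ * y z)
        - (β - ρ) * Real.exp (-(μ * z)) / y z)
      ((β - ρ - 2 * β) / (2 * y z ^ 3) *
        (2 * Real.exp (-(μ * z)) * y z * (deriv y z + μ * y z)
          - (β - ρ) * Real.exp (-(μ * z)) / y z)) z := fun z =>
    aux_deriv β ρ μ (β - ρ) α hα y z (hy z).hasDerivAt (hy' z).hasDerivAt (hYne z)
      (hdd z) (Or.inr rfl)
  have hf0 : ∀ z ∈ Set.Ioo a b, HasDerivAt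
      (fun z => (2 * Real.exp (-(μ * z)) * y z * (deriv y z + μ * y z)
          - (β + ρ) * Real.exp (-(μ * z)) / y z) ^ (ρ + β) *
        (2 * Real.exp (-(μ * z)) * y z * (deriv y z + μ * y z)
          - (β - ρ) * Real.exp (-(μ * z)) / y z) ^ (ρ - β)) 0 z := by
    intro z hz
    obtain ⟨h1, h2⟩ := hpos z hz
    have h1' := h1.ne'
    have h2' := h2.ne'
    have h := ((hu1 z).rpow_const (p := ρ + β) (Or.inl h1')).mul ((hu2 z).rpow_const (p := ρ - β) (Or.inl h2'))
    refine h.congr_deriv ?_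
    rw [Real.rpow_sub_one h1', Real.rpow_sub_one h2']
    have hy3 : (2 : ℝ) * y z ^ 3 ≠ 0 := mul_ne_zero two_ne_zero (pow_ne_zero 3 (hYne z))
    generalize (2 * Real.exp (-(μ * z)) * y z * (deriv y z + μ * y z) - (β + ρ) * Real.exp (-(μ * z)) / y z) = U at h1' ⊢
    generalize (2 * Real.exp (-(μ * z)) * y z * (deriv y z + μ * y z) - (β - ρ) * Real.exp (-(μ * z)) / y z) = V at h2' ⊢
    field_simp
    ring
  intro x hx x' hx'
  have key : ∀ p ∈ Set.Ioo a b, ∀ q ∈ Set.Ioo a b, p ≤ q →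
      (fun z => (2 * Real.exp (-(μ * z)) * y z * (deriv y z + μ * y z)
          - (β + ρ) * Real.exp (-(μ * z)) / y z) ^ (ρ + β) *
        (2 * Real.exp (-(μ * z)) * y z * (deriv y z + μ * y z)
          - (β - ρ) * Real.exp (-(μ * z)) / y z) ^ (ρ - β)) q
      = (fun z => (2 * Real.exp (-(μ * z)) * y z * (deriv y z + μ * y z)
          - (β + ρ) * Real.exp (-(μ * z)) / y z) ^ (ρ + β) *
        (2 * Real.exp (-(μ * z)) * y z * (deriv y z + μ * y z)
          - (β - ρ) * Real.exp (-(μ * z)) / y z) ^ (ρ - β)) p := by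
    intro p hp q hq hpq
    have hsub : Set.Icc p q ⊆ Set.Ioo a b := fun t ht =>
      ⟨lt_of_lt_of_le hp.1 ht.1, lt_of_le_of_lt ht.2 hq.2⟩
    exact constant_of_has_deriv_right_zero
      (fun t ht => ((hf0 t (hsub ht)).continuousAt).continuousWithinAt)
      (fun t ht => (hf0 t (hsub ⟨ht.1, le_of_lt ht.2⟩)).hasDerivWithinAt)
      q (Set.right_mem_Icc.2 hpq)
  rcases le_total x x' with h | h
  · exact (key x hx x' hx' h).symm
  · exact key x' hx' x hx h
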